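/- arXiv:2502.19744 — 3 statements merged into one kernel-verified Lean document; each statement's English description precedes it below -/
import Mathlib

section
/- Suppose all hospitals have binary capped additive valuations and doctors have strict complete preference orders. Fix a hospital h and a set T ⊆ D with v_h(T) = |T|, and define f_T(S) = |S ∩ T| for S ⊆ D. Fixing all other hospitals' valuations and all doctor preferences, let X be the HWSD-optimal allocation when h's valuation is replaced by f_T, and let Y be the HWSD-optimal allocation when h reports its true valuation v_h. If X_h = T, then |Y_h| ≥ |T|. -/
open Finset

/-- A matroid rank function on subsets of a finite ground set. -/
def IsMRF {α : Type*} [DecidableEq α] (v : Finset α → ℤ) : Prop :=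
  v ∅ = 0 ∧
  (∀ (S : Finset α) (d : α), d ∉ S →
    v (insert d S) - v S = 0 ∨ v (insert d S) - v S = 1) ∧
  (∀ (S T : Finset α) (d : α), S ⊆ T → d ∉ T →
    v (insert d T) - v T ≤ v (insert d S) - v S)

/-- The bundle of doctors assigned to hospital `h` under allocation `X`. -/
def bundle {n m : ℕ} (X : Fin m → Option (Fin n)) (h : Fin n) : Finset (Fin m) :=
  Finset.univ.filter (fun d => X d = some h)

/-- An allocation is non-redundant if every hospital's bundle is independent. -/
def NonRedundant {n m : ℕ} (v : Fin n → Finset (Fin m) → ℤ)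
    (X : Fin m → Option (Fin n)) : Prop :=
  ∀ h, v h (bundle X h) = (bundle X h).card

/-- Hospital utilitarian welfare. -/
def USW {n m : ℕ} (v : Fin n → Finset (Fin m) → ℤ) (X : Fin m → Option (Fin n)) : ℤ :=
  ∑ h, v h (bundle X h)

/-- Doctor `d` strictly prefers the first outcome to the second; every hospital is
strictly preferred to being unallocated (`none`). -/
def OptStrictPref {n m : ℕ} (P : Fin m → Fin n → Fin n → Prop) (d : Fin m) :
    Option (Fin n) → Option (Fin n) → Prop
  | some h, some h' => P d h h'
  | some _, none => True
  | none, _ => False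

/-- `(h, S)` is a blocking pair for `X`. -/
def IsBlockingPair {n m : ℕ} (v : Fin n → Finset (Fin m) → ℤ)
    (P : Fin m → Fin n → Fin n → Prop) (X : Fin m → Option (Fin n))
    (h : Fin n) (S : Finset (Fin m)) : Prop :=
  v h S = S.card ∧ v h (bundle X h) < v h S ∧
    ∀ d ∈ S, X d = some h ∨ OptStrictPref P d (some h) (X d)

/-- An allocation is stable if it is non-redundant and admits no blocking pair. -/
def Stable {n m : ℕ} (v : Fin n → Finset (Fin m) → ℤ)
    (P : Fin m → Fin n → Fin n → Prop) (X : Fin m → Option (Fin n)) : Prop :=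
  NonRedundant v X ∧ ¬ ∃ h S, IsBlockingPair v P X h S

/-- The HWSD ordering on non-redundant allocations: `X` beats `Y`. -/
def HWSDgt {n m : ℕ} (v : Fin n → Finset (Fin m) → ℤ)
    (P : Fin m → Fin n → Fin n → Prop) (X Y : Fin m → Option (Fin n)) : Prop :=
  USW v Y < USW v X ∨
  (USW v X = USW v Y ∧ ∃ j : Fin m,
    OptStrictPref P j (X j) (Y j) ∧ ∀ k : Fin m, k < j → X k = Y k)

/-- `X` is the HWSD-optimal allocation: the greatest non-redundant allocation in the
HWSD ordering (the output of the High Welfare Serial Dictatorship mechanism). -/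
def IsHWSDOpt {n m : ℕ} (v : Fin n → Finset (Fin m) → ℤ)
    (P : Fin m → Fin n → Fin n → Prop) (X : Fin m → Option (Fin n)) : Prop :=
  NonRedundant v X ∧ ∀ Y, NonRedundant v Y → Y ≠ X → HWSDgt v P X Y

/-- A binary capped additive valuation. -/
def IsBinaryCappedAdditive {α : Type*} (v : Finset α → ℤ) : Prop :=
  ∃ (b : ℕ) (w : α → ℤ), 0 < b ∧ (∀ d, w d = 0 ∨ w d = 1) ∧
    ∀ S : Finset α, v S = min (b : ℤ) (∑ d ∈ S, w d)

section HWSDAuxiliary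

open Finset

variable {n m : ℕ}

lemma hwsd_mem_bundle {X : Fin m → Option (Fin n)} {g : Fin n} {d : Fin m} :
    d ∈ bundle X g ↔ X d = some g := by simp [bundle]

lemma hwsd_optStrictPref_irrefl {P : Fin m → Fin n → Fin n → Prop}
    (hP : ∀ d, IsStrictTotalOrder (Fin n) (P d)) {d : Fin m} {o : Option (Fin n)}
    (hoo : OptStrictPref P d o o) : False := by
  haveI := hP d
  cases o with
  | none => exact hoo
  | some a => exact irrefl_of (P d) a hoo

lemma hwsd_optStrictPref_asymm {P : Fin m → Fin n → Fin n → Prop}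
    (hP : ∀ d, IsStrictTotalOrder (Fin n) (P d)) {d : Fin m} {o₁ o₂ : Option (Fin n)}
    (h1 : OptStrictPref P d o₁ o₂) (h2 : OptStrictPref P d o₂ o₁) : False := by
  haveI := hP d
  cases o₁ with
  | none => exact h1
  | some a => cases o₂ with
    | none => exact h2
    | some c => exact irrefl_of (P d) a (trans_of (P d) (h1 : P d a c) (h2 : P d c a))

lemma hwsd_card_insert_inter {α : Type*} [DecidableEq α] {M B : Finset α} {u : α}
    (hu : u ∉ M) :
    ((insert u M) ∩ B).card = (M ∩ B).card + if u ∈ B then 1 else 0 := by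
  by_cases hb : u ∈ B
  · rw [Finset.insert_inter_of_mem hb, Finset.card_insert_of_notMem (by simp [hu]),
      if_pos hb]
  · rw [Finset.insert_inter_of_notMem hb, if_neg hb, add_zero]

lemma hwsd_bundle_override (Z W : Fin m → Option (Fin n)) (M : Finset (Fin m)) (g : Fin n) :
    bundle (fun d => if d ∈ M then W d else Z d) g
      = (M ∩ bundle W g) ∪ (bundle Z g \ M) := by
  ext d
  by_cases hd : d ∈ M <;> simp [bundle, hd]

lemma hwsd_card_override (Z W : Fin m → Option (Fin n)) (M : Finset (Fin m)) (g : Fin n) :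
    (bundle (fun d => if d ∈ M then W d else Z d) g).card + (M ∩ bundle Z g).card
      = (M ∩ bundle W g).card + (bundle Z g).card := by
  rw [hwsd_bundle_override, Finset.card_union_of_disjoint, add_assoc,
    Finset.inter_comm M (bundle Z g), Finset.card_sdiff_add_card_inter]
  exact Finset.disjoint_left.2 (fun a ha hb => (Finset.mem_sdiff.1 hb).2
      (Finset.mem_of_mem_inter_left ha))

lemma hwsd_usw_eq_card {v : Fin n → Finset (Fin m) → ℤ} {Z : Fin m → Option (Fin n)}
    (hZ : NonRedundant v Z) :
    USW v Z = ((Finset.univ.filter (fun d => Z d ≠ none)).card : ℤ) := by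
  unfold USW
  rw [Finset.sum_congr rfl (fun g _ => hZ g)]
  rw [← Nat.cast_sum]
  congr 1
  have h1 : ∀ g : Fin n, (bundle Z g).card
      = ∑ d : Fin m, if Z d = some g then 1 else 0 := by
    intro g
    rw [bundle, Finset.card_filter]
  rw [Finset.sum_congr rfl (fun g _ => h1 g), Finset.sum_comm, Finset.card_filter]
  apply Finset.sum_congr rfl
  intro d _
  cases hzd : Z d with
  | none => simp [hzd]
  | some a => simp [hzd, Finset.sum_ite_eq']

end HWSDAuxiliary

section HWSDSegment

open Finset

variable {n m : ℕ}

/-- A reversed alternating segment for the HWSD exchange argument. -/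
def HWSDSegR (X Y : Fin m → Option (Fin n)) (h : Fin n) : Fin n → List (Fin m) → Prop
  | γ, [] => γ = h
  | γ, u :: S => ∃ δ, HWSDSegR X Y h δ S ∧ X u = some δ ∧ Y u = some γ ∧ γ ≠ h ∧ δ ≠ γ

lemma hwsd_segr_nil {X Y : Fin m → Option (Fin n)} {h γ : Fin n}
    (hseg : HWSDSegR X Y h γ []) : γ = h := hseg

lemma hwsd_segr_eq_nil {X Y : Fin m → Option (Fin n)} {h : Fin n} {S : List (Fin m)}
    (hseg : HWSDSegR X Y h h S) : S = [] := by
  cases S with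
  | nil => rfl
  | cons u S => obtain ⟨δ, _, _, _, hγh, _⟩ := hseg; exact absurd rfl hγh

lemma hwsd_segr_mem {X Y : Fin m → Option (Fin n)} {h : Fin n} {S : List (Fin m)}
    {γ : Fin n} (hseg : HWSDSegR X Y h γ S) :
    ∀ u ∈ S, (∃ a, X u = some a) ∧ (∃ c, Y u = some c ∧ c ≠ h) ∧ X u ≠ Y u := by
  induction S generalizing γ with
  | nil => intro u hu; exact absurd hu List.not_mem_nil
  | cons u' S ih =>
    obtain ⟨δ, hsegS, hXu, hYu, hγh, hδγ⟩ := hseg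
    intro u hu
    rcases List.mem_cons.1 hu with rfl | hu
    · refine ⟨⟨δ, hXu⟩, ⟨γ, hYu, hγh⟩, ?_⟩
      rw [hXu, hYu]; simp [hδγ]
    · exact ih hsegS u hu

lemma hwsd_segr_count {X Y : Fin m → Option (Fin n)} {h : Fin n} {S : List (Fin m)}
    {γ : Fin n} (hseg : HWSDSegR X Y h γ S) (hnd : S.Nodup) (g : Fin n) :
    (S.toFinset ∩ bundle X g).card + (if γ = g then 1 else 0)
      = (S.toFinset ∩ bundle Y g).card + (if g = h then 1 else 0) := by
  induction S generalizing γ with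
  | nil =>
    have : γ = h := hseg
    subst this
    simp only [List.toFinset_nil, Finset.empty_inter, Finset.card_empty, zero_add]
    by_cases hg : γ = g
    · simp [hg]
    · rw [if_neg hg, if_neg (fun hh => hg hh.symm)]
  | cons u S ih =>
    obtain ⟨δ, hsegS, hXu, hYu, hγh, hδγ⟩ := hseg
    have hu : u ∉ S.toFinset := by
      simp only [List.nodup_cons] at hnd
      simpa using hnd.1
    have hndS : S.Nodup := (List.nodup_cons.1 hnd).2
    rw [List.toFinset_cons, hwsd_card_insert_inter hu, hwsd_card_insert_inter hu]
    have e1 : (if u ∈ bundle X g then 1 else 0) = (if δ = g then 1 else 0) := by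
      by_cases hd : δ = g <;> simp [hwsd_mem_bundle, hXu, hd]
    have e2 : (if u ∈ bundle Y g then 1 else 0) = (if γ = g then 1 else 0) := by
      by_cases hd : γ = g <;> simp [hwsd_mem_bundle, hYu, hd]
    have := ih hsegS hndS
    omega

end HWSDSegment

/-- With binary capped additive hospital valuations, if reporting `f_T` (for an
independent set `T`) gives hospital `h` exactly the bundle `T`, then truthful
reporting gives `h` a bundle of size at least `|T|`. -/
theorem hwsd_truthful_full_capped_additive {n m : ℕ} (v : Fin n → Finset (Fin m) → ℤ)
    (P : Fin m → Fin n → Fin n → Prop)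
    (hv : ∀ h, IsBinaryCappedAdditive (v h)) (hP : ∀ d, IsStrictTotalOrder (Fin n) (P d))
    (h : Fin n) (T : Finset (Fin m)) (hT : v h T = T.card)
    (X Y : Fin m → Option (Fin n))
    (hX : IsHWSDOpt (Function.update v h (fun S => ((S ∩ T).card : ℤ))) P X)
    (hY : IsHWSDOpt v P Y)
    (hXh : bundle X h = T) :
    T.card ≤ (bundle Y h).card := by
  classical
  by_contra hcon
  push_neg at hcon
  -- extract caps and approval sets
  have hv2 := hv
  simp only [IsBinaryCappedAdditive] at hv2
  choose b w hb hw hval using hv2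
  set A : Fin n → Finset (Fin m) := fun g => Finset.univ.filter (fun d => w g d = 1) with hA
  have hsum : ∀ (g : Fin n) (S : Finset (Fin m)),
      (∑ d ∈ S, w g d) = ((S ∩ A g).card : ℤ) := by
    intro g S
    have e0 : S ∩ A g = S.filter (fun d => w g d = 1) := by
      ext d
      simp [hA, Finset.mem_filter, and_comm]
    rw [e0, ← Finset.sum_filter_add_sum_filter_not S (fun d => w g d = 1)]
    have e1 : ∑ d ∈ S.filter (fun d => ¬ w g d = 1), w g d = 0 := by
      apply Finset.sum_eq_zero
      intro d hd
      rcases hw g d with h0 | h1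
      · exact h0
      · exact absurd h1 (Finset.mem_filter.1 hd).2
    have e2 : ∑ d ∈ S.filter (fun d => w g d = 1), w g d
        = ((S.filter (fun d => w g d = 1)).card : ℤ) := by
      rw [Finset.sum_congr rfl (fun d hd => (Finset.mem_filter.1 hd).2)]
      simp
    rw [e1, e2, add_zero]
  have hchar : ∀ (g : Fin n) (S : Finset (Fin m)),
      v g S = S.card ↔ (S ⊆ A g ∧ S.card ≤ b g) := by
    intro g S
    rw [hval g S, hsum g S, ← Nat.cast_min, Nat.cast_inj]
    have hle : (S ∩ A g).card ≤ S.card := Finset.card_le_card Finset.inter_subset_left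
    constructor
    · intro hmin
      have hc : (S ∩ A g).card = S.card ∧ S.card ≤ b g := by omega
      exact ⟨Finset.inter_eq_left.1
        (Finset.eq_of_subset_of_card_le Finset.inter_subset_left (le_of_eq hc.1.symm)),
        hc.2⟩
    · rintro ⟨hsub, hcap⟩
      rw [Finset.inter_eq_left.2 hsub]
      omega
  set v' := Function.update v h (fun S => ((S ∩ T).card : ℤ)) with hv'def
  have hv'app : ∀ S : Finset (Fin m), v' h S = ((S ∩ T).card : ℤ) := by
    intro S; rw [hv'def]; simp
  have hv'ne : ∀ g, g ≠ h → v' g = v g := by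
    intro g hg; rw [hv'def]; exact Function.update_of_ne hg _ _
  have hvchar : ∀ Z : Fin m → Option (Fin n), NonRedundant v Z ↔
      ∀ g, bundle Z g ⊆ A g ∧ (bundle Z g).card ≤ b g := by
    intro Z
    constructor
    · intro hZ g; exact (hchar g _).1 (hZ g)
    · intro hZ g; exact (hchar g _).2 (hZ g)
  have hv'char : ∀ Z : Fin m → Option (Fin n), NonRedundant v' Z ↔
      (bundle Z h ⊆ T ∧ ∀ g, g ≠ h → bundle Z g ⊆ A g ∧ (bundle Z g).card ≤ b g) := by
    intro Z
    constructor
    · intro hZ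
      refine ⟨?_, fun g hg => (hchar g _).1 (by rw [← hv'ne g hg]; exact hZ g)⟩
      have h1 := hZ h
      rw [hv'app] at h1
      have h2 : (bundle Z h ∩ T).card = (bundle Z h).card := by exact_mod_cast h1
      exact Finset.inter_eq_left.1
        (Finset.eq_of_subset_of_card_le Finset.inter_subset_left (le_of_eq h2.symm))
    · rintro ⟨h1, h2⟩ g
      by_cases hg : g = h
      · subst hg
        rw [hv'app, Finset.inter_eq_left.2 h1]
      · rw [hv'ne g hg]
        exact (hchar g _).2 (h2 g hg)
  obtain ⟨hTA, hTb⟩ := (hchar h T).1 hT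
  have hYfeas := (hvchar Y).1 hY.1
  have hXfeas := (hv'char X).1 hX.1
  have hXA : ∀ g, bundle X g ⊆ A g := by
    intro g
    by_cases hg : g = h
    · subst hg; rw [hXh]; exact hTA
    · exact (hXfeas.2 g hg).1
  -- CONTRA-N : the chain reaches a doctor unallocated under Y
  have contraN : ∀ (S : List (Fin m)) (γ : Fin n) (u0 : Fin m),
      HWSDSegR X Y h γ S → S.Nodup → u0 ∉ S.toFinset →
      X u0 = some γ → Y u0 = none → False := by
    intro S γ u0 hseg hnd hu0 hXu0 hYu0
    set M : Finset (Fin m) := insert u0 S.toFinset with hM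
    set Y' : Fin m → Option (Fin n) := fun d => if d ∈ M then X d else Y d with hY'
    have hcard : ∀ g, (bundle Y' g).card = (bundle Y g).card + (if g = h then 1 else 0) := by
      intro g
      have co := hwsd_card_override Y X M g
      rw [← hY'] at co
      have e1 : (M ∩ bundle Y g).card = (S.toFinset ∩ bundle Y g).card := by
        rw [hM, hwsd_card_insert_inter hu0, if_neg, add_zero]
        simp [hwsd_mem_bundle, hYu0]
      have e2 : (M ∩ bundle X g).card
          = (S.toFinset ∩ bundle X g).card + (if γ = g then 1 else 0) := by
        rw [hM, hwsd_card_insert_inter hu0]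
        congr 1
        by_cases hd : γ = g <;> simp [hwsd_mem_bundle, hXu0, hd]
      have kc := hwsd_segr_count hseg hnd g
      split_ifs at kc e2 ⊢ <;> omega
    have hfeas : NonRedundant v Y' := by
      refine (hvchar Y').2 (fun g => ⟨?_, ?_⟩)
      · rw [hY', hwsd_bundle_override]
        exact Finset.union_subset (Finset.inter_subset_right.trans (hXA g))
          (Finset.sdiff_subset.trans (hYfeas g).1)
      · rw [hcard g]
        by_cases hg : g = h
        · rw [if_pos hg]
          have h6 := (hYfeas g).2
          have h7 : (bundle Y g).card < T.card := by rw [hg]; exact hcon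
          have h8 : T.card ≤ b g := by rw [hg]; exact hTb
          omega
        · rw [if_neg hg, add_zero]
          exact (hYfeas g).2
    have hflt : Finset.univ.filter (fun d => Y' d ≠ none)
        = insert u0 (Finset.univ.filter (fun d => Y d ≠ none)) := by
      ext d
      simp only [Finset.mem_insert, Finset.mem_filter, Finset.mem_univ, true_and]
      by_cases hd : d ∈ M
      · rcases Finset.mem_insert.1 hd with rfl | hdS
        · simp [hY', hd, hXu0]
        · obtain ⟨⟨a, hXa⟩, ⟨c, hYc, _⟩, _⟩ := hwsd_segr_mem hseg d (List.mem_toFinset.1 hdS)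
          simp [hY', hd, hXa, hYc]
      · have hdu : d ≠ u0 := fun hh => hd (hh ▸ Finset.mem_insert_self u0 S.toFinset)
        simp [hY', hd, hdu]
    have husw : USW v Y' = USW v Y + 1 := by
      rw [hwsd_usw_eq_card hfeas, hwsd_usw_eq_card hY.1, hflt,
        Finset.card_insert_of_notMem (by simp [hYu0])]
      push_cast
      ring
    have hne : Y' ≠ Y := by
      intro hh
      have h2 := congrFun hh u0
      have h3 : Y' u0 = X u0 := by
        rw [hY']
        simp [hM]
      rw [h3, hXu0, hYu0] at h2
      exact Option.some_ne_none _ h2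
    rcases hY.2 Y' hfeas hne with hlt' | ⟨heq, _⟩ <;> omega
  -- CONTRA-D : the chain reaches a hospital with slack under X
  have contraD : ∀ (S : List (Fin m)) (γ : Fin n),
      HWSDSegR X Y h γ S → S.Nodup → γ ≠ h → (bundle X γ).card < b γ → False := by
    intro S γ hseg hnd hγh hslack
    set M : Finset (Fin m) := S.toFinset with hM
    obtain ⟨u0, hu0M⟩ : ∃ u0, u0 ∈ M := by
      cases S with
      | nil => exact absurd (hwsd_segr_nil hseg) hγh
      | cons a L => exact ⟨a, by simp [hM]⟩
    set Y' : Fin m → Option (Fin n) := fun d => if d ∈ M then X d else Y d with hY'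
    set X' : Fin m → Option (Fin n) := fun d => if d ∈ M then Y d else X d with hX'
    have hmm : ∀ u ∈ M, (∃ a, X u = some a) ∧ (∃ c, Y u = some c ∧ c ≠ h) ∧ X u ≠ Y u :=
      fun u hu => hwsd_segr_mem hseg u (List.mem_toFinset.1 hu)
    have hcardY : ∀ g, (bundle Y' g).card + (if γ = g then 1 else 0)
        = (bundle Y g).card + (if g = h then 1 else 0) := by
      intro g
      have co := hwsd_card_override Y X M g
      rw [← hY'] at co
      have kc := hwsd_segr_count hseg hnd g
      rw [← hM] at kc
      split_ifs at kc ⊢ <;> omega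
    have hcardX : ∀ g, (bundle X' g).card + (if g = h then 1 else 0)
        = (bundle X g).card + (if γ = g then 1 else 0) := by
      intro g
      have co := hwsd_card_override X Y M g
      rw [← hX'] at co
      have kc := hwsd_segr_count hseg hnd g
      rw [← hM] at kc
      split_ifs at kc ⊢ <;> omega
    have hMYh : M ∩ bundle Y h = ∅ := by
      ext u
      simp only [Finset.mem_inter, hwsd_mem_bundle, Finset.notMem_empty, iff_false, not_and]
      intro huM hYu
      obtain ⟨_, ⟨c, hYc, hch⟩, _⟩ := hmm u huM
      rw [hYc] at hYu
      exact hch (Option.some_inj.1 hYu)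
    have hfeasY : NonRedundant v Y' := by
      refine (hvchar Y').2 (fun g => ⟨?_, ?_⟩)
      · rw [hY', hwsd_bundle_override]
        exact Finset.union_subset (Finset.inter_subset_right.trans (hXA g))
          (Finset.sdiff_subset.trans (hYfeas g).1)
      · have hcg := hcardY g
        by_cases hg : g = h
        · rw [if_neg (fun hh : γ = g => hγh (hh.trans hg)), if_pos hg] at hcg
          have h6 := (hYfeas g).2
          have h7 : (bundle Y g).card < T.card := by rw [hg]; exact hcon
          have h8 : T.card ≤ b g := by rw [hg]; exact hTb
          omega
        · rw [if_neg hg] at hcg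
          have := (hYfeas g).2
          split_ifs at hcg <;> omega
    have hfeasX : NonRedundant v' X' := by
      refine (hv'char X').2 ⟨?_, fun g hg => ⟨?_, ?_⟩⟩
      · rw [hX', hwsd_bundle_override, hMYh, Finset.empty_union]
        exact Finset.sdiff_subset.trans (le_of_eq hXh)
      · rw [hX', hwsd_bundle_override]
        exact Finset.union_subset (Finset.inter_subset_right.trans (hYfeas g).1)
          (Finset.sdiff_subset.trans (hXA g))
      · have hcg := hcardX g
        rw [if_neg hg] at hcg
        by_cases hgγ : γ = g
        · subst hgγ
          rw [if_pos rfl] at hcg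
          omega
        · rw [if_neg hgγ] at hcg
          have := (hXfeas.2 g hg).2
          omega
    have hfltY : Finset.univ.filter (fun d => Y' d ≠ none)
        = Finset.univ.filter (fun d => Y d ≠ none) := by
      ext d
      simp only [Finset.mem_filter, Finset.mem_univ, true_and]
      by_cases hd : d ∈ M
      · obtain ⟨⟨a, hXa⟩, ⟨c, hYc, _⟩, _⟩ := hmm d hd
        simp [hY', hd, hXa, hYc]
      · simp [hY', hd]
    have hfltX : Finset.univ.filter (fun d => X' d ≠ none)
        = Finset.univ.filter (fun d => X d ≠ none) := by
      ext d
      simp only [Finset.mem_filter, Finset.mem_univ, true_and]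
      by_cases hd : d ∈ M
      · obtain ⟨⟨a, hXa⟩, ⟨c, hYc, _⟩, _⟩ := hmm d hd
        simp [hX', hd, hXa, hYc]
      · simp [hX', hd]
    have huswY : USW v Y' = USW v Y := by
      rw [hwsd_usw_eq_card hfeasY, hwsd_usw_eq_card hY.1, hfltY]
    have huswX : USW v' X' = USW v' X := by
      rw [hwsd_usw_eq_card hfeasX, hwsd_usw_eq_card hX.1, hfltX]
    have hneY : Y' ≠ Y := by
      intro hh
      have h2 := congrFun hh u0
      have h3 : Y' u0 = X u0 := by rw [hY']; simp [hu0M]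
      rw [h3] at h2
      exact (hmm u0 hu0M).2.2 h2
    have hneX : X' ≠ X := by
      intro hh
      have h2 := congrFun hh u0
      have h3 : X' u0 = Y u0 := by rw [hX']; simp [hu0M]
      rw [h3] at h2
      exact (hmm u0 hu0M).2.2 h2.symm
    obtain ⟨j1, hpref1, hagree1⟩ :
        ∃ j, OptStrictPref P j (Y j) (Y' j) ∧ ∀ k, k < j → Y k = Y' k := by
      rcases hY.2 Y' hfeasY hneY with hlt' | ⟨heq, hj⟩
      · omega
      · exact hj
    obtain ⟨j2, hpref2, hagree2⟩ :
        ∃ j, OptStrictPref P j (X j) (X' j) ∧ ∀ k, k < j → X k = X' k := by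
      rcases hX.2 X' hfeasX hneX with hlt' | ⟨heq, hj⟩
      · omega
      · exact hj
    have hj1M : j1 ∈ M := by
      by_contra hjM
      have he : Y' j1 = Y j1 := by rw [hY']; simp [hjM]
      rw [he] at hpref1
      exact hwsd_optStrictPref_irrefl hP hpref1
    have hj2M : j2 ∈ M := by
      by_contra hjM
      have he : X' j2 = X j2 := by rw [hX']; simp [hjM]
      rw [he] at hpref2
      exact hwsd_optStrictPref_irrefl hP hpref2
    have hlow1 : ∀ k ∈ M, ¬ k < j1 := by
      intro k hk hlt2
      have he := hagree1 k hlt2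
      have he2 : Y' k = X k := by rw [hY']; simp [hk]
      rw [he2] at he
      exact (hmm k hk).2.2 he.symm
    have hlow2 : ∀ k ∈ M, ¬ k < j2 := by
      intro k hk hlt2
      have he := hagree2 k hlt2
      have he2 : X' k = Y k := by rw [hX']; simp [hk]
      rw [he2] at he
      exact (hmm k hk).2.2 he
    have hj12 : j1 = j2 := by
      rcases lt_trichotomy j1 j2 with hl | he | hl
      · exact absurd hl (hlow2 j1 hj1M)
      · exact he
      · exact absurd hl (hlow1 j2 hj2M)
    subst hj12
    have e1 : Y' j1 = X j1 := by rw [hY']; simp [hj1M]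
    have e2 : X' j1 = Y j1 := by rw [hX']; simp [hj1M]
    rw [e1] at hpref1
    rw [e2] at hpref2
    exact hwsd_optStrictPref_asymm hP hpref1 hpref2
  -- fresh doctor exists
  have fresh : ∀ (U : Finset (Fin m)) (γ : Fin n),
      ((U ∩ (bundle X γ \ bundle Y γ)).card + 1
        ≤ (U ∩ (bundle Y γ \ bundle X γ)).card + (if γ = h then 1 else 0)) →
      (γ = h ∨ b γ ≤ (bundle X γ).card) →
      ∃ u0, u0 ∈ bundle X γ \ bundle Y γ ∧ u0 ∉ U := by
    intro U γ hinvγ hside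
    have h1 : (bundle X γ \ bundle Y γ).card + (bundle X γ ∩ bundle Y γ).card
        = (bundle X γ).card := Finset.card_sdiff_add_card_inter _ _
    have h2 : (bundle Y γ \ bundle X γ).card + (bundle Y γ ∩ bundle X γ).card
        = (bundle Y γ).card := Finset.card_sdiff_add_card_inter _ _
    have h3 : (bundle X γ ∩ bundle Y γ).card = (bundle Y γ ∩ bundle X γ).card := by
      rw [Finset.inter_comm]
    have h4 : (U ∩ (bundle Y γ \ bundle X γ)).card ≤ (bundle Y γ \ bundle X γ).card :=
      Finset.card_le_card Finset.inter_subset_right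
    have hlt2 : (U ∩ (bundle X γ \ bundle Y γ)).card < (bundle X γ \ bundle Y γ).card := by
      by_cases hγh : γ = h
      · rw [if_pos hγh] at hinvγ
        have h5 : (bundle Y γ).card < (bundle X γ).card := by rw [hγh, hXh]; exact hcon
        omega
      · rcases hside with h' | hble
        · exact absurd h' hγh
        · rw [if_neg hγh] at hinvγ
          have h6 : (bundle Y γ).card ≤ b γ := (hYfeas γ).2
          omega
    have hns : ¬ (bundle X γ \ bundle Y γ) ⊆ U := by
      intro hsub
      rw [Finset.inter_eq_right.2 hsub] at hlt2
      exact lt_irrefl _ hlt2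
    exact Finset.not_subset.1 hns
  -- invariant preservation
  have invstep : ∀ (U : Finset (Fin m)) (γ γ1 : Fin n) (u0 : Fin m),
      u0 ∉ U → u0 ∈ bundle X γ \ bundle Y γ → Y u0 = some γ1 → X u0 = some γ →
      (∀ δ, (U ∩ (bundle X δ \ bundle Y δ)).card + (if δ = γ then 1 else 0)
          ≤ (U ∩ (bundle Y δ \ bundle X δ)).card + (if δ = h then 1 else 0)) →
      (∀ δ, ((insert u0 U) ∩ (bundle X δ \ bundle Y δ)).card + (if δ = γ1 then 1 else 0)
          ≤ ((insert u0 U) ∩ (bundle Y δ \ bundle X δ)).card + (if δ = h then 1 else 0)) := by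
    intro U γ γ1 u0 hu2 hu1 hYu0 hXu0 hinv δ
    have hγγ1 : γ ≠ γ1 := by
      intro hh
      exact (Finset.mem_sdiff.1 hu1).2 (hwsd_mem_bundle.2 (by rw [hYu0, hh]))
    have hx : ((insert u0 U) ∩ (bundle X δ \ bundle Y δ)).card
        = (U ∩ (bundle X δ \ bundle Y δ)).card + (if δ = γ then 1 else 0) := by
      rw [hwsd_card_insert_inter hu2]
      congr 1
      by_cases hd : δ = γ
      · subst hd
        rw [if_pos hu1, if_pos rfl]
      · rw [if_neg, if_neg hd]
        intro hmem
        have := hwsd_mem_bundle.1 (Finset.mem_sdiff.1 hmem).1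
        rw [hXu0] at this
        exact hd (Option.some_inj.1 this).symm
    have hy : ((insert u0 U) ∩ (bundle Y δ \ bundle X δ)).card
        = (U ∩ (bundle Y δ \ bundle X δ)).card + (if δ = γ1 then 1 else 0) := by
      rw [hwsd_card_insert_inter hu2]
      congr 1
      by_cases hd : δ = γ1
      · subst hd
        rw [if_pos, if_pos rfl]
        refine Finset.mem_sdiff.2 ⟨hwsd_mem_bundle.2 hYu0, ?_⟩
        intro hmem
        have := hwsd_mem_bundle.1 hmem
        rw [hXu0] at this
        exact hγγ1 (Option.some_inj.1 this)
      · rw [if_neg, if_neg hd]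
        intro hmem
        have := hwsd_mem_bundle.1 (Finset.mem_sdiff.1 hmem).1
        rw [hYu0] at this
        exact hd (Option.some_inj.1 this).symm
    rw [hx, hy]
    have hold := hinv δ
    split_ifs at hold ⊢ <;> omega
  -- the main loop
  have main : ∀ (r : ℕ) (U : Finset (Fin m)) (S : List (Fin m)) (γ : Fin n),
      HWSDSegR X Y h γ S → S.Nodup → (∀ u ∈ S, u ∈ U) →
      (∀ δ, (U ∩ (bundle X δ \ bundle Y δ)).card + (if δ = γ then 1 else 0)
          ≤ (U ∩ (bundle Y δ \ bundle X δ)).card + (if δ = h then 1 else 0)) →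
      m ≤ r + U.card → False := by
    intro r
    induction r with
    | zero =>
      intro U S γ hseg hnd hsub hinv hm
      by_cases hγh : γ = h
      · obtain ⟨u0, hu1, hu2⟩ := fresh U γ (by simpa [hγh] using hinv γ) (Or.inl hγh)
        have hUu : U = Finset.univ := by
          apply Finset.eq_univ_of_card
          have := Finset.card_le_univ U
          simp only [Finset.card_univ, Fintype.card_fin] at this ⊢
          omega
        exact hu2 (hUu ▸ Finset.mem_univ u0)
      · by_cases hslack : (bundle X γ).card < b γ
        · exact contraD S γ hseg hnd hγh hslack
        · obtain ⟨u0, hu1, hu2⟩ := fresh U γ (by simpa [hγh] using hinv γ)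
            (Or.inr (le_of_not_gt hslack))
          have hUu : U = Finset.univ := by
            apply Finset.eq_univ_of_card
            have := Finset.card_le_univ U
            simp only [Finset.card_univ, Fintype.card_fin] at this ⊢
            omega
          exact hu2 (hUu ▸ Finset.mem_univ u0)
    | succ r ih =>
      intro U S γ hseg hnd hsub hinv hm
      have hm' : ∀ u0, u0 ∉ U → m ≤ r + (insert u0 U).card := by
        intro u0 hu2
        rw [Finset.card_insert_of_notMem hu2]
        omega
      by_cases hγh : γ = h
      · obtain ⟨u0, hu1, hu2⟩ := fresh U γ (by simpa [hγh] using hinv γ) (Or.inl hγh)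
        have hXu0 : X u0 = some γ := hwsd_mem_bundle.1 (Finset.mem_sdiff.1 hu1).1
        have hu0S : u0 ∉ S.toFinset := fun hh => hu2 (hsub u0 (List.mem_toFinset.1 hh))
        cases hYu0 : Y u0 with
        | none => exact contraN S γ u0 hseg hnd hu0S hXu0 hYu0
        | some γ1 =>
          have hγ1γ : γ1 ≠ γ := by
            intro hh
            exact (Finset.mem_sdiff.1 hu1).2 (hwsd_mem_bundle.2 (by rw [hYu0, hh]))
          have hγ1h : γ1 ≠ h := fun hh => hγ1γ (hh.trans hγh.symm)
          refine ih (insert u0 U) [u0] γ1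
            ⟨h, rfl, by rw [hXu0, hγh], hYu0, hγ1h, fun hh => hγ1h hh.symm⟩
            (List.nodup_singleton u0) ?_ (invstep U γ γ1 u0 hu2 hu1 hYu0 hXu0 hinv)
            (hm' u0 hu2)
          intro u hu
          rw [List.mem_singleton.1 hu]
          exact Finset.mem_insert_self u0 U
      · by_cases hslack : (bundle X γ).card < b γ
        · exact contraD S γ hseg hnd hγh hslack
        · obtain ⟨u0, hu1, hu2⟩ := fresh U γ (by simpa [hγh] using hinv γ)
            (Or.inr (le_of_not_gt hslack))
          have hXu0 : X u0 = some γ := hwsd_mem_bundle.1 (Finset.mem_sdiff.1 hu1).1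
          have hu0S : u0 ∉ S.toFinset := fun hh => hu2 (hsub u0 (List.mem_toFinset.1 hh))
          cases hYu0 : Y u0 with
          | none => exact contraN S γ u0 hseg hnd hu0S hXu0 hYu0
          | some γ1 =>
            have hγγ1 : γ ≠ γ1 := by
              intro hh
              exact (Finset.mem_sdiff.1 hu1).2 (hwsd_mem_bundle.2 (by rw [hYu0, hh]))
            by_cases hγ1h : γ1 = h
            · subst hγ1h
              refine ih (insert u0 U) [] γ1 rfl List.nodup_nil (by simp)
                (invstep U γ γ1 u0 hu2 hu1 hYu0 hXu0 hinv) (hm' u0 hu2)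
            · refine ih (insert u0 U) (u0 :: S) γ1 ⟨γ, hseg, hXu0, hYu0, hγ1h, hγγ1⟩
                (List.nodup_cons.2 ⟨fun hc => hu2 (hsub u0 hc), hnd⟩) ?_
                (invstep U γ γ1 u0 hu2 hu1 hYu0 hXu0 hinv) (hm' u0 hu2)
              intro u hu
              rcases List.mem_cons.1 hu with he | hu
              · rw [he]; exact Finset.mem_insert_self u0 U
              · exact Finset.mem_insert_of_mem (hsub u hu)
  exact main m ∅ [] h rfl List.nodup_nil (by simp) (fun δ => by simp) (by simp)
end

section
/- For every profile of matroid rank hospital valuations and strict complete doctor preference orders, the allocation output by the serial dictatorship (SD) mechanism is stable. -/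
open Finset

/-- The doctors (strictly) before `i` assigned to hospital `h` under `X`:
the partial bundle of `h` at the start of doctor `i`'s turn in serial dictatorship. -/
def bundleBefore {n m : ℕ} (X : Fin m → Option (Fin n)) (h : Fin n) (i : Fin m) :
    Finset (Fin m) :=
  Finset.univ.filter (fun d => X d = some h ∧ d < i)

/-- `X` is the output of the serial dictatorship mechanism: processing doctors in
order, each doctor `i` is assigned to the first hospital (in `i`'s reported
preference order `P i`) whose marginal gain for `i`, given its current partial
bundle, is `1`; `i` stays unallocated if no such hospital exists. -/
def IsSDOutput {n m : ℕ} (v : Fin n → Finset (Fin m) → ℤ)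
    (P : Fin m → Fin n → Fin n → Prop) (X : Fin m → Option (Fin n)) : Prop :=
  ∀ i : Fin m,
    (∀ h, X i = some h →
      (v h (insert i (bundleBefore X h i)) - v h (bundleBefore X h i) = 1 ∧
       ∀ h', P i h' h →
         v h' (insert i (bundleBefore X h' i)) - v h' (bundleBefore X h' i) = 0)) ∧
    (X i = none → ∀ h,
      v h (insert i (bundleBefore X h i)) - v h (bundleBefore X h i) = 0)

section aux
variable {α : Type*} [DecidableEq α] {v : Finset α → ℤ}

lemma mrf_marg_nonneg (hv : IsMRF v) {S : Finset α} {d : α} (hd : d ∉ S) :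
    0 ≤ v (insert d S) - v S := by
  rcases hv.2.1 S d hd with h | h <;> omega

lemma mrf_union_le (hv : IsMRF v) (B A : Finset α) : v B ≤ v (B ∪ A) := by
  induction A using Finset.induction_on with
  | empty => simp
  | @insert a A ha ih =>
      by_cases hmem : a ∈ B ∪ A
      · rw [Finset.union_insert, Finset.insert_eq_self.mpr hmem]; exact ih
      · rw [Finset.union_insert]
        have := mrf_marg_nonneg hv hmem
        omega

lemma mrf_exchange (hv : IsMRF v) (A : Finset α) :
    ∀ B : Finset α, v B < v (B ∪ A) →
      ∃ d ∈ A, d ∉ B ∧ v (insert d B) - v B = 1 := by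
  induction A using Finset.induction_on with
  | empty => intro B hB; simp at hB
  | @insert a A ha ih =>
    intro B hB
    by_cases h1 : v B < v (B ∪ A)
    · obtain ⟨d, hd, hdB, hm⟩ := ih B h1
      exact ⟨d, mem_insert_of_mem hd, hdB, hm⟩
    · have hge := mrf_union_le hv B A
      rw [Finset.union_insert] at hB
      have haBA : a ∉ B ∪ A := by
        intro hmem
        rw [Finset.insert_eq_self.mpr hmem] at hB; omega
      have hm1 : v (insert a (B ∪ A)) - v (B ∪ A) = 1 := by
        rcases hv.2.1 (B ∪ A) a haBA with h | h <;> omega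
      have haB : a ∉ B := fun h => haBA (mem_union_left _ h)
      have hsub := hv.2.2 B (B ∪ A) a Finset.subset_union_left haBA
      rcases hv.2.1 B a haB with h | h
      · omega
      · exact ⟨a, mem_insert_self a A, haB, h⟩

end aux

lemma bundleBefore_eq {n m : ℕ} (X : Fin m → Option (Fin n)) (h : Fin n) (i : Fin m) :
    bundleBefore X h i = Finset.univ.filter (fun d => X d = some h ∧ d.val < i.val) := by
  ext d; simp only [bundleBefore, Finset.mem_filter, Finset.mem_univ, true_and, Fin.lt_def]

lemma bundleBefore_subset_bundle {n m : ℕ} (X : Fin m → Option (Fin n)) (h : Fin n)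
    (i : Fin m) : bundleBefore X h i ⊆ bundle X h := by
  intro d hd
  simp only [bundleBefore, bundle, mem_filter, mem_univ, true_and] at *
  exact hd.1

lemma sd_prefix {n m : ℕ} (v : Fin n → Finset (Fin m) → ℤ)
    (P : Fin m → Fin n → Fin n → Prop) (X : Fin m → Option (Fin n))
    (hv : ∀ h, IsMRF (v h)) (hX : IsSDOutput v P X) (h : Fin n) (k : ℕ) :
    v h (Finset.univ.filter (fun d => X d = some h ∧ d.val < k)) =
      (Finset.univ.filter (fun d => X d = some h ∧ d.val < k)).card := by
  induction k with
  | zero => simp [(hv h).1]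
  | succ k ih =>
    by_cases hk : k < m
    · set i : Fin m := ⟨k, hk⟩ with hi
      have hbb : bundleBefore X h i =
          Finset.univ.filter (fun d => X d = some h ∧ d.val < k) := bundleBefore_eq X h i
      by_cases hXi : X i = some h
      · have hset : (Finset.univ.filter (fun d : Fin m => X d = some h ∧ d.val < k + 1)) =
            insert i (Finset.univ.filter (fun d => X d = some h ∧ d.val < k)) := by
          ext d
          simp only [mem_filter, mem_univ, true_and, Finset.mem_insert]
          constructor
          · rintro ⟨hd1, hd2⟩
            rcases Nat.lt_succ_iff_lt_or_eq.mp hd2 with h' | h'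
            · exact Or.inr ⟨hd1, h'⟩
            · exact Or.inl (Fin.ext h')
          · rintro (rfl | ⟨hd1, hd2⟩)
            · exact ⟨hXi, Nat.lt_succ_self k⟩
            · exact ⟨hd1, Nat.lt_succ_of_lt hd2⟩
        have hnotmem : i ∉ Finset.univ.filter (fun d : Fin m => X d = some h ∧ d.val < k) := by
          simp [hi]
        have hmarg := ((hX i).1 h hXi).1
        rw [hbb] at hmarg
        rw [hset, Finset.card_insert_of_notMem hnotmem]
        push_cast
        omega
      · have hset : (Finset.univ.filter (fun d : Fin m => X d = some h ∧ d.val < k + 1)) =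
            Finset.univ.filter (fun d => X d = some h ∧ d.val < k) := by
          ext d
          simp only [mem_filter, mem_univ, true_and]
          constructor
          · rintro ⟨hd1, hd2⟩
            refine ⟨hd1, ?_⟩
            rcases Nat.lt_succ_iff_lt_or_eq.mp hd2 with h' | h'
            · exact h'
            · exact absurd hd1 (by rw [show d = i from Fin.ext h']; exact hXi)
          · rintro ⟨hd1, hd2⟩
            exact ⟨hd1, Nat.lt_succ_of_lt hd2⟩
        rw [hset]; exact ih
    · have hset : (Finset.univ.filter (fun d : Fin m => X d = some h ∧ d.val < k + 1)) =
          Finset.univ.filter (fun d => X d = some h ∧ d.val < k) := by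
        ext d
        simp only [mem_filter, mem_univ, true_and]
        have hd := d.isLt
        constructor
        · rintro ⟨hd1, _⟩; exact ⟨hd1, by omega⟩
        · rintro ⟨hd1, hd2⟩; exact ⟨hd1, by omega⟩
      rw [hset]; exact ih

lemma sd_nonredundant {n m : ℕ} (v : Fin n → Finset (Fin m) → ℤ)
    (P : Fin m → Fin n → Fin n → Prop) (X : Fin m → Option (Fin n))
    (hv : ∀ h, IsMRF (v h)) (hX : IsSDOutput v P X) : NonRedundant v X := by
  intro h
  have hb : bundle X h = Finset.univ.filter (fun d => X d = some h ∧ d.val < m) := by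
    ext d
    simp only [bundle, mem_filter, mem_univ, true_and]
    exact ⟨fun h1 => ⟨h1, d.isLt⟩, fun h1 => h1.1⟩
  rw [hb]
  exact sd_prefix v P X hv hX h m

/-- The allocation output by the serial dictatorship mechanism is stable. -/
theorem sd_stable {n m : ℕ} (v : Fin n → Finset (Fin m) → ℤ)
    (P : Fin m → Fin n → Fin n → Prop)
    (hv : ∀ h, IsMRF (v h)) (hP : ∀ d, IsStrictTotalOrder (Fin n) (P d))
    (X : Fin m → Option (Fin n)) (hX : IsSDOutput v P X) :
    Stable v P X := by
  refine ⟨sd_nonredundant v P X hv hX, ?_⟩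
  rintro ⟨h, S, hS1, hS2, hS3⟩
  -- v h (bundle X h) < v h S ≤ v h (bundle X h ∪ S)
  have hlt : v h (bundle X h) < v h (bundle X h ∪ S) := by
    have h1 : v h S ≤ v h (S ∪ bundle X h) := mrf_union_le (hv h) S (bundle X h)
    rw [Finset.union_comm] at h1
    omega
  obtain ⟨d, hdS, hdB, hmarg⟩ := mrf_exchange (hv h) S (bundle X h) hlt
  -- d is not assigned to h
  have hXd : X d ≠ some h := by
    intro hc
    exact hdB (by simp [bundle, hc])
  -- marginal at bundleBefore is ≥ 1 by submodularity
  have hsub : bundleBefore X h d ⊆ bundle X h := bundleBefore_subset_bundle X h d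
  have hdnb : d ∉ bundleBefore X h d := fun hc => hdB (hsub hc)
  have hmono := (hv h).2.2 (bundleBefore X h d) (bundle X h) d hsub hdB
  have hge1 : 1 ≤ v h (insert d (bundleBefore X h d)) - v h (bundleBefore X h d) := by
    omega
  rcases hS3 d hdS with hc | hc
  · exact hXd hc
  · cases hXd' : X d with
    | none =>
      have := (hX d).2 hXd' h
      omega
    | some h' =>
      rw [hXd'] at hc
      have hpref : P d h h' := hc
      have := ((hX d).1 h' hXd').2 h hpref
      omega
end

section
/- The serial dictatorship (SD) mechanism is 2-approximately hospital-strategyproof for matroid rank valuations: fix matroid rank valuations for the hospitals and strict complete preference orders for the doctors, and let X be the SD output for the true profile. For any hospital h and any matroid rank valuation v', let Y be the SD output when v_h is replaced by v' (all else unchanged). Then v_h(Y_h) ≤ 2·v_h(X_h). -/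
open Finset

/- ======================= auxiliary development ======================= -/

namespace SDAux
open scoped Classical

section MRF
variable {α : Type*} [DecidableEq α] {v : Finset α → ℤ}

lemma marg_nonneg (hv : IsMRF v) {S : Finset α} {d : α} (hd : d ∉ S) :
    0 ≤ v (insert d S) - v S := by
  rcases hv.2.1 S d hd with h | h <;> omega

lemma marg_le_one (hv : IsMRF v) {S : Finset α} {d : α} (hd : d ∉ S) :
    v (insert d S) - v S ≤ 1 := by
  rcases hv.2.1 S d hd with h | h <;> omega

lemma le_union (hv : IsMRF v) (A B : Finset α) : v A ≤ v (A ∪ B) := by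
  induction B using Finset.induction_on with
  | empty => simp
  | insert e B hnot ih =>
    by_cases he : e ∈ A ∪ B
    · rw [Finset.union_insert, Finset.insert_eq_self.2 he]; exact ih
    · rw [Finset.union_insert]
      have := marg_nonneg hv he
      omega

lemma mono (hv : IsMRF v) {A B : Finset α} (hAB : A ⊆ B) : v A ≤ v B := by
  have := le_union hv A B
  rwa [Finset.union_eq_right.2 hAB] at this

lemma nonneg (hv : IsMRF v) (A : Finset α) : 0 ≤ v A := by
  have := mono hv (Finset.empty_subset A); rwa [hv.1] at this

lemma le_card (hv : IsMRF v) (A : Finset α) : v A ≤ A.card := by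
  induction A using Finset.induction_on with
  | empty => simp [hv.1]
  | insert e B hnot ih =>
    have := marg_le_one hv hnot
    rw [Finset.card_insert_of_notMem hnot]
    push_cast
    omega

lemma subadd (hv : IsMRF v) (A B : Finset α) : v (A ∪ B) ≤ v A + v B := by
  induction B using Finset.induction_on with
  | empty => simp [hv.1]
  | insert e B hnot ih =>
    rw [Finset.union_insert]
    by_cases he : e ∈ A ∪ B
    · rw [Finset.insert_eq_self.2 he]
      exact le_trans ih (by have := mono hv (Finset.subset_insert e B); omega)
    · have h1 : v (insert e (A ∪ B)) - v (A ∪ B) ≤ v (insert e B) - v B :=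
        hv.2.2 B (A ∪ B) e Finset.subset_union_right he
      omega

/-- spanning: adding elements each spanned by `A` doesn't increase rank -/
lemma spanning (hv : IsMRF v) {A B : Finset α}
    (hB : ∀ e ∈ B, e ∉ A → v (insert e A) - v A = 0) : v (A ∪ B) = v A := by
  induction B using Finset.induction_on with
  | empty => simp
  | insert e B hnot ih =>
    have ih' := ih (fun e' he' h => hB e' (Finset.mem_insert_of_mem he') h)
    rw [Finset.union_insert]
    by_cases he : e ∈ A ∪ B
    · rw [Finset.insert_eq_self.2 he]; exact ih'
    · have heA : e ∉ A := fun h => he (Finset.mem_union_left _ h)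
      have h0 := hB e (Finset.mem_insert_self e B) heA
      have h1 : v (insert e (A ∪ B)) - v (A ∪ B) ≤ v (insert e A) - v A :=
        hv.2.2 A (A ∪ B) e Finset.subset_union_left he
      have h2 := marg_nonneg hv he
      omega

-- L1: d accepted in X-run (marginal 1 on A); A gains d.
lemma stepL1 (hv : IsMRF v) {A B : Finset α} {d : α} (hdA : d ∉ A) (hdB : d ∉ B)
    (h1 : v (insert d A) - v A = 1) :
    v (insert d (A ∪ B)) - v (insert d A) ≤ v (A ∪ B) - v A := by
  have hd : d ∉ A ∪ B := by simp [hdA, hdB]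
  have := marg_le_one hv hd
  omega

-- L2: accepted in X at this hospital, rejected in Y.
lemma stepL2 (hv : IsMRF v) {A B : Finset α} {d : α} (hdA : d ∉ A) (hdB : d ∉ B)
    (h1 : v (insert d A) - v A = 1) (h0 : v (insert d B) - v B = 0) :
    v (insert d A ∪ B) - v (insert d A) = v (A ∪ B) - v A - 1 := by
  have hd : d ∉ A ∪ B := by simp [hdA, hdB]
  have e1 : insert d A ∪ B = insert d (A ∪ B) := Finset.insert_union d A B
  have h2 : v (insert d (A ∪ B)) - v (A ∪ B) ≤ v (insert d B) - v B :=
    hv.2.2 B (A ∪ B) d Finset.subset_union_right hd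
  have h3 := marg_nonneg hv hd
  rw [e1]; omega

-- L3: B gains d, generic bound.
lemma stepL3 (hv : IsMRF v) {A B : Finset α} {d : α} (hdA : d ∉ A) (hdB : d ∉ B) :
    v (A ∪ insert d B) - v A ≤ (v (A ∪ B) - v A) + 1 := by
  have hd : d ∉ A ∪ B := by simp [hdA, hdB]
  have e1 : A ∪ insert d B = insert d (A ∪ B) := Finset.union_insert d A B
  have := marg_le_one hv hd
  rw [e1]; omega

-- L4: B gains d, but d was rejected in X-run here (marginal 0 on A).
lemma stepL4 (hv : IsMRF v) {A B : Finset α} {d : α} (hdA : d ∉ A) (hdB : d ∉ B)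
    (h0 : v (insert d A) - v A = 0) :
    v (A ∪ insert d B) = v (A ∪ B) := by
  have hd : d ∉ A ∪ B := by simp [hdA, hdB]
  have e1 : A ∪ insert d B = insert d (A ∪ B) := Finset.union_insert d A B
  have h2 : v (insert d (A ∪ B)) - v (A ∪ B) ≤ v (insert d A) - v A :=
    hv.2.2 A (A ∪ B) d Finset.subset_union_left hd
  have h3 := marg_nonneg hv hd
  rw [e1]; omega

end MRF

lemma sum_shift_one {n : ℕ} {E : Finset (Fin n)} {f f' : Fin n → ℤ} {a : Fin n}
    (ha : a ∈ E) (hoth : ∀ g ∈ E, g ≠ a → f' g = f g) :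
    ∑ g ∈ E, f' g = ∑ g ∈ E, f g + (f' a - f a) := by
  rw [← Finset.add_sum_erase E f' ha, ← Finset.add_sum_erase E f ha,
    Finset.sum_congr rfl
      (fun g hg => hoth g (Finset.mem_of_mem_erase hg) (Finset.ne_of_mem_erase hg))]
  ring

lemma sum_shift_two {n : ℕ} {E : Finset (Fin n)} {f f' : Fin n → ℤ} {a b : Fin n}
    (ha : a ∈ E) (hb : b ∈ E) (hab : a ≠ b)
    (hoth : ∀ g ∈ E, g ≠ a → g ≠ b → f' g = f g) :
    ∑ g ∈ E, f' g = ∑ g ∈ E, f g + (f' a - f a) + (f' b - f b) := by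
  have hb' : b ∈ E.erase a := Finset.mem_erase.2 ⟨fun hba => hab hba.symm, hb⟩
  rw [← Finset.add_sum_erase E f' ha, ← Finset.add_sum_erase E f ha,
    ← Finset.add_sum_erase _ f' hb', ← Finset.add_sum_erase _ f hb',
    Finset.sum_congr rfl (fun g hg => hoth g
      (Finset.mem_of_mem_erase (Finset.mem_of_mem_erase hg))
      (Finset.ne_of_mem_erase (Finset.mem_of_mem_erase hg))
      (Finset.ne_of_mem_erase hg))]
  ring

section Cnt
variable {m : ℕ}

/-- prefix filter -/
noncomputable def cnt (Q : Fin m → Prop) (i : ℕ) : Finset (Fin m) :=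
  Finset.univ.filter (fun e => Q e ∧ (e : ℕ) < i)

variable {Q : Fin m → Prop}

lemma cnt_zero : cnt Q 0 = ∅ := by simp [cnt]

lemma mem_cnt {e : Fin m} {i : ℕ} : e ∈ cnt Q i ↔ Q e ∧ (e : ℕ) < i := by
  simp [cnt]

lemma not_mem_cnt_self {i : ℕ} (hi : i < m) : (⟨i, hi⟩ : Fin m) ∉ cnt Q i := by
  simp [mem_cnt]

lemma cnt_succ_pos {i : ℕ} (hi : i < m) (hQ : Q ⟨i, hi⟩) :
    cnt Q (i + 1) = insert ⟨i, hi⟩ (cnt Q i) := by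
  ext e
  simp only [mem_cnt, Finset.mem_insert, Nat.lt_succ_iff_lt_or_eq]
  constructor
  · rintro ⟨hQe, hlt | heq⟩
    · exact Or.inr ⟨hQe, hlt⟩
    · exact Or.inl (show e = ⟨i, hi⟩ from Fin.eq_of_val_eq heq)
  · rintro (rfl | ⟨hQe, hlt⟩)
    · exact ⟨hQ, Or.inr rfl⟩
    · exact ⟨hQe, Or.inl hlt⟩

lemma cnt_succ_neg {i : ℕ} (hi : i < m) (hQ : ¬ Q ⟨i, hi⟩) :
    cnt Q (i + 1) = cnt Q i := by
  ext e
  simp only [mem_cnt, Nat.lt_succ_iff_lt_or_eq]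
  constructor
  · rintro ⟨hQe, hlt | heq⟩
    · exact ⟨hQe, hlt⟩
    · exact absurd ((show e = ⟨i, hi⟩ from Fin.eq_of_val_eq heq) ▸ hQe) hQ
  · rintro ⟨hQe, hlt⟩; exact ⟨hQe, Or.inl hlt⟩

lemma cnt_mono {i j : ℕ} (hij : i ≤ j) : cnt Q i ⊆ cnt Q j := by
  intro e; simp only [mem_cnt]; rintro ⟨h1, h2⟩; exact ⟨h1, lt_of_lt_of_le h2 hij⟩

lemma cnt_top : cnt Q m = Finset.univ.filter Q := by
  ext e; simp [mem_cnt, e.isLt]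

lemma card_cnt_succ_pos {i : ℕ} (hi : i < m) (hQ : Q ⟨i, hi⟩) :
    (cnt Q (i + 1)).card = (cnt Q i).card + 1 := by
  rw [cnt_succ_pos hi hQ, Finset.card_insert_of_notMem (not_mem_cnt_self hi)]

end Cnt

section Main
variable {n m : ℕ}

lemma bundleBefore_eq (X : Fin m → Option (Fin n)) (g : Fin n) {i : ℕ} (hi : i < m) :
    bundleBefore X g ⟨i, hi⟩ = cnt (fun e => X e = some g) i := by
  ext e
  simp [bundleBefore, mem_cnt, Fin.lt_def]

lemma bundle_eq (X : Fin m → Option (Fin n)) (g : Fin n) :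
    bundle X g = cnt (fun e => X e = some g) m := by
  ext e; simp [bundle, mem_cnt, e.isLt]

/-- The potential function: for each hospital `g ≠ h`, the rank increase of the
`X`-run prefix bundle caused by adding the `Y`-run prefix bundle. -/
noncomputable def Phi (v : Fin n → Finset (Fin m) → ℤ) (X Y : Fin m → Option (Fin n))
    (h : Fin n) (i : ℕ) : ℤ :=
  ∑ g ∈ Finset.univ.erase h,
    (v g (cnt (fun e => X e = some g) i ∪ cnt (fun e => Y e = some g) i)
      - v g (cnt (fun e => X e = some g) i))

/-- Doctors pushed down into `h` in the `Y`-run. -/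
noncomputable def Wset (P : Fin m → Fin n → Fin n → Prop) (X Y : Fin m → Option (Fin n))
    (h : Fin n) (i : ℕ) : Finset (Fin m) :=
  cnt (fun e => Y e = some h ∧ ∃ g, X e = some g ∧ P e g h) i

/-- Doctors that `h` has in the `X`-run but not in the `Y`-run. -/
noncomputable def Rset (X Y : Fin m → Option (Fin n)) (h : Fin n) (i : ℕ) : Finset (Fin m) :=
  cnt (fun e => X e = some h ∧ ¬ (Y e = some h)) i

theorem invariant (v : Fin n → Finset (Fin m) → ℤ)
    (P : Fin m → Fin n → Fin n → Prop)
    (hv : ∀ h, IsMRF (v h)) (hP : ∀ d, IsStrictTotalOrder (Fin n) (P d))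
    (h : Fin n) (v' : Finset (Fin m) → ℤ) (hv' : IsMRF v')
    (X Y : Fin m → Option (Fin n))
    (hX : IsSDOutput v P X) (hY : IsSDOutput (Function.update v h v') P Y) :
    ∀ i : ℕ,
      ((Wset P X Y h i).card : ℤ) + Phi v X Y h i ≤ ((Rset X Y h i).card : ℤ) := by
  intro i
  induction i with
  | zero =>
    simp only [Wset, Rset, Phi, cnt_zero]
    simp [(fun g => (hv g).1 : ∀ g, v g ∅ = 0)]
  | succ i IH =>
    by_cases him : i < m
    case neg =>
      simp only [Wset, Rset, Phi] at IH ⊢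
      have hc : ∀ (Q : Fin m → Prop), cnt Q (i+1) = cnt Q i := fun Q => by
        ext e
        simp only [mem_cnt, Nat.lt_succ_iff_lt_or_eq]
        have := e.isLt
        constructor
        · rintro ⟨h1, h2 | h2⟩
          · exact ⟨h1, h2⟩
          · omega
        · rintro ⟨h1, h2⟩; exact ⟨h1, Or.inl h2⟩
      simp only [hc]
      exact IH
    case pos =>
      set d : Fin m := ⟨i, him⟩ with hd_def
      -- abbreviations
      have hBB : ∀ (Z : Fin m → Option (Fin n)) (g : Fin n),
          bundleBefore Z g d = cnt (fun e => Z e = some g) i :=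
        fun Z g => bundleBefore_eq Z g him
      have hupd : ∀ g : Fin n, g ≠ h → Function.update v h v' g = v g :=
        fun g hg => Function.update_of_ne hg v' v
      have hRmono : ((Rset X Y h i).card : ℤ) ≤ ((Rset X Y h (i+1)).card : ℤ) := by
        exact_mod_cast Finset.card_le_card
          (cnt_mono (Q := fun e => X e = some h ∧ ¬ (Y e = some h)) (Nat.le_succ i))
      have hdA : ∀ (Q : Fin m → Prop), d ∉ cnt Q i := fun Q => not_mem_cnt_self him
      have Xpos : ∀ g : Fin n, X d = some g →
          cnt (fun e => X e = some g) (i+1) = insert d (cnt (fun e => X e = some g) i) :=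
        fun g hg => cnt_succ_pos (Q := fun e => X e = some g) him hg
      have Xneg : ∀ g : Fin n, ¬ X d = some g →
          cnt (fun e => X e = some g) (i+1) = cnt (fun e => X e = some g) i :=
        fun g hg => cnt_succ_neg (Q := fun e => X e = some g) him hg
      have Ypos : ∀ g : Fin n, Y d = some g →
          cnt (fun e => Y e = some g) (i+1) = insert d (cnt (fun e => Y e = some g) i) :=
        fun g hg => cnt_succ_pos (Q := fun e => Y e = some g) him hg
      have Yneg : ∀ g : Fin n, ¬ Y d = some g →
          cnt (fun e => Y e = some g) (i+1) = cnt (fun e => Y e = some g) i :=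
        fun g hg => cnt_succ_neg (Q := fun e => Y e = some g) him hg
      have Wpos : (Y d = some h ∧ ∃ g, X d = some g ∧ P d g h) →
          ((Wset P X Y h (i+1)).card : ℤ) = ((Wset P X Y h i).card : ℤ) + 1 := fun hc => by
        unfold Wset
        exact_mod_cast card_cnt_succ_pos
          (Q := fun e => Y e = some h ∧ ∃ g, X e = some g ∧ P e g h) him hc
      have Wneg : ¬ (Y d = some h ∧ ∃ g, X d = some g ∧ P d g h) →
          Wset P X Y h (i+1) = Wset P X Y h i := fun hc =>
        cnt_succ_neg (Q := fun e => Y e = some h ∧ ∃ g, X e = some g ∧ P e g h) him hc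
      have Rpos : (X d = some h ∧ ¬ (Y d = some h)) →
          ((Rset X Y h (i+1)).card : ℤ) = ((Rset X Y h i).card : ℤ) + 1 := fun hc => by
        unfold Rset
        exact_mod_cast card_cnt_succ_pos
          (Q := fun e => X e = some h ∧ ¬ (Y e = some h)) him hc
      -- the marginal facts from the two SD runs
      have hXd := hX d
      have hYd := hY d
      rcases hxd : X d with _ | x <;> rcases hyd : Y d with _ | y
      · -- X d = none, Y d = none
        have hW := Wneg (by rintro ⟨h1, _⟩; rw [hyd] at h1; exact nomatch h1)
        have hPhi : Phi v X Y h (i+1) = Phi v X Y h i := by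
          unfold Phi
          refine Finset.sum_congr rfl fun g _ => ?_
          rw [Xneg g (by rw [hxd]; exact fun hc => nomatch hc),
            Yneg g (by rw [hyd]; exact fun hc => nomatch hc)]
        rw [hW, hPhi]
        exact le_trans IH hRmono
      · -- X d = none, Y d = some y
        have hW := Wneg (by
          rintro ⟨_, g, hg, _⟩; rw [hxd] at hg; exact nomatch hg)
        -- marginal of d at y in the X-run is 0
        have hy0 : v y (insert d (cnt (fun e => X e = some y) i))
            - v y (cnt (fun e => X e = some y) i) = 0 := by
          have := hXd.2 hxd y
          rwa [hBB X y] at this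
        have hPhi : Phi v X Y h (i+1) = Phi v X Y h i := by
          unfold Phi
          refine Finset.sum_congr rfl fun g hg => ?_
          rw [Xneg g (by rw [hxd]; exact fun hc => nomatch hc)]
          by_cases hgy : g = y
          · subst hgy
            rw [Ypos g hyd, stepL4 (hv g) (hdA _) (hdA _) hy0]
          · rw [Yneg g (by rw [hyd]; exact fun hc => hgy (Option.some.inj hc).symm)]
        rw [hW, hPhi]
        exact le_trans IH hRmono
      · -- X d = some x, Y d = none
        have hW := Wneg (by rintro ⟨h1, _⟩; rw [hyd] at h1; exact nomatch h1)
        have hx1 : v x (insert d (cnt (fun e => X e = some x) i))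
            - v x (cnt (fun e => X e = some x) i) = 1 := by
          have := (hXd.1 x hxd).1
          rwa [hBB X x] at this
        by_cases hxh : x = h
        · -- x = h : root created
          have hR := Rpos ⟨hxh ▸ hxd, by rw [hyd]; exact fun hc => nomatch hc⟩
          have hPhi : Phi v X Y h (i+1) = Phi v X Y h i := by
            unfold Phi
            refine Finset.sum_congr rfl fun g hg => ?_
            have hgh : g ≠ h := Finset.ne_of_mem_erase hg
            rw [Xneg g (by
                rw [hxd]; exact fun hc => hgh (((Option.some.inj hc).symm).trans hxh)),
              Yneg g (by rw [hyd]; exact fun hc => nomatch hc)]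
          rw [hW, hPhi, hR]
          linarith
        · -- x ≠ h : potential at x drops by 1
          have hBx0 : v x (insert d (cnt (fun e => Y e = some x) i))
              - v x (cnt (fun e => Y e = some x) i) = 0 := by
            have := hYd.2 hyd x
            rwa [hBB Y x, hupd x hxh] at this
          have hPhi : Phi v X Y h (i+1) ≤ Phi v X Y h i := by
            unfold Phi
            refine Finset.sum_le_sum fun g hg => ?_
            rw [Yneg g (by rw [hyd]; exact fun hc => nomatch hc)]
            by_cases hgx : g = x
            · subst hgx
              rw [Xpos g hxd]
              have := stepL2 (hv g) (hdA (fun e => X e = some g))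
                (hdA (fun e => Y e = some g)) hx1 hBx0
              omega
            · rw [Xneg g (by rw [hxd]; exact fun hc => hgx (Option.some.inj hc).symm)]
          rw [hW]
          linarith
      · -- X d = some x, Y d = some y
        have hx1 : v x (insert d (cnt (fun e => X e = some x) i))
            - v x (cnt (fun e => X e = some x) i) = 1 := by
          have := (hXd.1 x hxd).1
          rwa [hBB X x] at this
        haveI := hP d
        by_cases hxy : x = y
        · -- same hospital in both runs
          have hW := Wneg (by
            rintro ⟨h1, g, hg, hpg⟩
            rw [hyd] at h1; rw [hxd] at hg
            obtain rfl := Option.some.inj h1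
            obtain rfl := Option.some.inj hg
            obtain rfl := hxy
            exact irrefl_of (P d) _ hpg)
          have hPhi : Phi v X Y h (i+1) ≤ Phi v X Y h i := by
            unfold Phi
            refine Finset.sum_le_sum fun g hg => ?_
            by_cases hgx : g = x
            · subst hgx
              rw [Xpos g hxd, Ypos g (hxy ▸ hyd : Y d = some g)]
              have e1 : insert d (cnt (fun e => X e = some g) i) ∪
                  insert d (cnt (fun e => Y e = some g) i) =
                  insert d (cnt (fun e => X e = some g) i ∪ cnt (fun e => Y e = some g) i) := by
                rw [Finset.insert_union, Finset.union_insert, Finset.insert_idem]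
              rw [e1]
              exact stepL1 (hv g) (hdA _) (hdA _) hx1
            · rw [Xneg g (by rw [hxd]; exact fun hc => hgx (Option.some.inj hc).symm),
                Yneg g (by
                  rw [hyd]; exact fun hc => hgx ((Option.some.inj hc).symm.trans hxy.symm))]
          rw [hW]
          linarith
        · rcases trichotomous_of (P d) x y with hPxy | heq | hPyx
          · -- (a) d preferred x, pushed down to y in the Y-run
            have hBx0' : (Function.update v h v') x
                  (insert d (cnt (fun e => Y e = some x) i))
                - (Function.update v h v') x (cnt (fun e => Y e = some x) i) = 0 := by
              have := (hYd.1 y hyd).2 x hPxy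
              rwa [hBB Y x] at this
            by_cases hxh : x = h
            · -- x = h : root created, Phi at y grows by at most 1
              have hyh : y ≠ h := fun hc => hxy (hxh.trans hc.symm)
              have hR := Rpos ⟨hxh ▸ hxd, by rw [hyd]; exact fun hc => hyh (Option.some.inj hc)⟩
              have hW := Wneg (by
                rintro ⟨h1, _⟩; rw [hyd] at h1
                exact hyh (Option.some.inj h1))
              have hPhi : Phi v X Y h (i+1) ≤ Phi v X Y h i + 1 := by
                unfold Phi
                have hyE : y ∈ Finset.univ.erase h :=
                  Finset.mem_erase.2 ⟨hyh, Finset.mem_univ y⟩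
                rw [sum_shift_one (f := fun g =>
                      (v g (cnt (fun e => X e = some g) i ∪ cnt (fun e => Y e = some g) i)
                        - v g (cnt (fun e => X e = some g) i)))
                    (f' := fun g =>
                      (v g (cnt (fun e => X e = some g) (i+1) ∪ cnt (fun e => Y e = some g) (i+1))
                        - v g (cnt (fun e => X e = some g) (i+1))))
                    hyE ?_]
                · -- bound the y-term
                  have e1 := Xneg y (by rw [hxd]; exact fun hc => hxy (Option.some.inj hc))
                  have e2 := Ypos y hyd
                  simp only [e1, e2]
                  have := stepL3 (hv y) (A := cnt (fun e => X e = some y) i)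
                    (B := cnt (fun e => Y e = some y) i) (d := d) (hdA _) (hdA _)
                  linarith
                · intro g hg hgy
                  have hgh : g ≠ h := Finset.ne_of_mem_erase hg
                  rw [Xneg g (by
                      rw [hxd]; exact fun hc => hgh (((Option.some.inj hc).symm).trans hxh)),
                    Yneg g (by rw [hyd]; exact fun hc => hgy (Option.some.inj hc).symm)]
              rw [hW, hR]
              linarith
            · -- x ≠ h
              have hBx0 : v x (insert d (cnt (fun e => Y e = some x) i))
                  - v x (cnt (fun e => Y e = some x) i) = 0 := by
                rwa [hupd x hxh] at hBx0'
              have hxterm := stepL2 (hv x) (hdA (fun e => X e = some x))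
                (hdA (fun e => Y e = some x)) hx1 hBx0
              have hxE : x ∈ Finset.univ.erase h :=
                Finset.mem_erase.2 ⟨hxh, Finset.mem_univ x⟩
              by_cases hyh : y = h
              · -- pushed down into h : Wset grows by 1, Phi at x drops by 1
                have hW := Wpos ⟨hyh ▸ hyd, x, hxd, hyh ▸ hPxy⟩
                have hPhi : Phi v X Y h (i+1) = Phi v X Y h i + (-1) := by
                  unfold Phi
                  rw [sum_shift_one (f := fun g =>
                        (v g (cnt (fun e => X e = some g) i ∪ cnt (fun e => Y e = some g) i)
                          - v g (cnt (fun e => X e = some g) i)))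
                      (f' := fun g =>
                        (v g (cnt (fun e => X e = some g) (i+1) ∪ cnt (fun e => Y e = some g) (i+1))
                          - v g (cnt (fun e => X e = some g) (i+1))))
                      hxE ?_]
                  · have e1 := Xpos x hxd
                    have e2 := Yneg x (by
                      rw [hyd]; exact fun hc => hxh ((Option.some.inj hc).symm.trans hyh))
                    simp only [e1, e2]
                    rw [hxterm]
                    ring
                  · intro g hg hgx
                    have hgh : g ≠ h := Finset.ne_of_mem_erase hg
                    rw [Xneg g (by rw [hxd]; exact fun hc => hgx (Option.some.inj hc).symm),
                      Yneg g (by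
                        rw [hyd]; exact fun hc => hgh (((Option.some.inj hc).symm).trans hyh))]
                rw [hW, hPhi]
                linarith
              · -- both x and y differ from h : Phi shifts at two points, net ≤ 0
                have hyE : y ∈ Finset.univ.erase h :=
                  Finset.mem_erase.2 ⟨hyh, Finset.mem_univ y⟩
                have hW := Wneg (by
                  rintro ⟨h1, _⟩; rw [hyd] at h1
                  exact hyh (Option.some.inj h1))
                have hPhi : Phi v X Y h (i+1) ≤ Phi v X Y h i := by
                  unfold Phi
                  rw [sum_shift_two (f := fun g =>
                        (v g (cnt (fun e => X e = some g) i ∪ cnt (fun e => Y e = some g) i)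
                          - v g (cnt (fun e => X e = some g) i)))
                      (f' := fun g =>
                        (v g (cnt (fun e => X e = some g) (i+1) ∪ cnt (fun e => Y e = some g) (i+1))
                          - v g (cnt (fun e => X e = some g) (i+1))))
                      hxE hyE hxy ?_]
                  · have ex1 := Xpos x hxd
                    have ex2 := Yneg x (by
                      rw [hyd]; exact fun hc => hxy (Option.some.inj hc).symm)
                    have ey1 := Xneg y (by rw [hxd]; exact fun hc => hxy (Option.some.inj hc))
                    have ey2 := Ypos y hyd
                    simp only [ex1, ex2, ey1, ey2]
                    have hyterm := stepL3 (hv y) (A := cnt (fun e => X e = some y) i)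
                      (B := cnt (fun e => Y e = some y) i) (d := d) (hdA _) (hdA _)
                    rw [hxterm]
                    linarith
                  · intro g hg hgx hgy
                    rw [Xneg g (by rw [hxd]; exact fun hc => hgx (Option.some.inj hc).symm),
                      Yneg g (by rw [hyd]; exact fun hc => hgy (Option.some.inj hc).symm)]
                rw [hW]
                linarith
          · exact absurd heq hxy
          · -- (b) d improved to y in the Y-run; rejected at y in the X-run
            have hy0 : v y (insert d (cnt (fun e => X e = some y) i))
                - v y (cnt (fun e => X e = some y) i) = 0 := by
              have := (hXd.1 x hxd).2 y hPyx
              rwa [hBB X y] at this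
            have hW := Wneg (by
              rintro ⟨h1, g, hg, hpg⟩
              rw [hyd] at h1; rw [hxd] at hg
              obtain rfl := Option.some.inj h1
              obtain rfl := Option.some.inj hg
              exact irrefl_of (P d) _ (trans_of (P d) hPyx hpg))
            have hPhi : Phi v X Y h (i+1) ≤ Phi v X Y h i := by
              unfold Phi
              refine Finset.sum_le_sum fun g hg => ?_
              by_cases hgx : g = x
              · subst hgx
                rw [Xpos g hxd,
                  Yneg g (by rw [hyd]; exact fun hc => hxy (Option.some.inj hc).symm)]
                rw [Finset.insert_union]
                exact stepL1 (hv g) (hdA _) (hdA _) hx1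
              · rw [Xneg g (by rw [hxd]; exact fun hc => hgx (Option.some.inj hc).symm)]
                by_cases hgy : g = y
                · subst hgy
                  rw [Ypos g hyd, stepL4 (hv g) (hdA _) (hdA _) hy0]
                · rw [Yneg g (by rw [hyd]; exact fun hc => hgy (Option.some.inj hc).symm)]
            rw [hW]
            linarith

lemma cnt_succ_ge {Q : Fin m → Prop} {i : ℕ} (hi : ¬ i < m) : cnt Q (i + 1) = cnt Q i := by
  ext e
  simp only [mem_cnt, Nat.lt_succ_iff_lt_or_eq]
  have := e.isLt
  constructor
  · rintro ⟨h1, h2 | h2⟩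
    · exact ⟨h1, h2⟩
    · omega
  · rintro ⟨h1, h2⟩; exact ⟨h1, Or.inl h2⟩

/-- The SD output is non-redundant. -/
lemma nonred (v : Fin n → Finset (Fin m) → ℤ) (P : Fin m → Fin n → Fin n → Prop)
    (hv : ∀ h, IsMRF (v h)) (X : Fin m → Option (Fin n)) (hX : IsSDOutput v P X)
    (h : Fin n) :
    ∀ i : ℕ, v h (cnt (fun e => X e = some h) i) =
      ((cnt (fun e => X e = some h) i).card : ℤ) := by
  intro i
  induction i with
  | zero => simp [cnt_zero, (hv h).1]
  | succ i IH =>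
    by_cases him : i < m
    · by_cases hxd : X ⟨i, him⟩ = some h
      · rw [cnt_succ_pos (Q := fun e => X e = some h) him hxd,
          Finset.card_insert_of_notMem (not_mem_cnt_self him)]
        have h1 := ((hX ⟨i, him⟩).1 h hxd).1
        rw [bundleBefore_eq X h him] at h1
        push_cast
        omega
      · rw [cnt_succ_neg (Q := fun e => X e = some h) him hxd]
        exact IH
    · rw [cnt_succ_ge him]
      exact IH

end Main
end SDAux

/-- Theorem 3.16: the serial dictatorship mechanism is 2-approximately
hospital-strategyproof when hospitals have matroid rank valuations. -/
theorem sd_two_approx_hospital_sp {n m : ℕ} (v : Fin n → Finset (Fin m) → ℤ)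
    (P : Fin m → Fin n → Fin n → Prop)
    (hv : ∀ h, IsMRF (v h)) (hP : ∀ d, IsStrictTotalOrder (Fin n) (P d))
    (h : Fin n) (v' : Finset (Fin m) → ℤ) (hv' : IsMRF v')
    (X Y : Fin m → Option (Fin n))
    (hX : IsSDOutput v P X) (hY : IsSDOutput (Function.update v h v') P Y) :
    v h (bundle Y h) ≤ 2 * v h (bundle X h) := by
  classical
  have hvh := hv h
  -- the invariant at time m
  have hInv := SDAux.invariant v P hv hP h v' hv' X Y hX hY m
  have hPhiNonneg : 0 ≤ SDAux.Phi v X Y h m := by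
    unfold SDAux.Phi
    refine Finset.sum_nonneg fun g _ => ?_
    have := SDAux.le_union (hv g) (SDAux.cnt (fun e => X e = some g) m)
      (SDAux.cnt (fun e => Y e = some g) m)
    omega
  have hWR : ((SDAux.Wset P X Y h m).card : ℤ) ≤ ((SDAux.Rset X Y h m).card : ℤ) := by
    linarith
  have hRsub : SDAux.Rset X Y h m ⊆ bundle X h := by
    intro e he
    unfold SDAux.Rset at he
    rw [SDAux.mem_cnt] at he
    simp only [bundle, Finset.mem_filter, Finset.mem_univ, true_and]
    exact he.1.1
  have hRcard : ((SDAux.Rset X Y h m).card : ℤ) ≤ ((bundle X h).card : ℤ) := by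
    exact_mod_cast Finset.card_le_card hRsub
  -- non-redundancy of the truthful run at h
  have hNR : v h (bundle X h) = ((bundle X h).card : ℤ) := by
    rw [SDAux.bundle_eq X h]
    exact SDAux.nonred v P hv X hX h m
  -- decompose Y's bundle of h
  set W1 : Finset (Fin m) :=
    Finset.univ.filter (fun e => Y e = some h ∧ ¬ ∃ g, X e = some g ∧ P e g h) with hW1def
  have hdecomp : bundle Y h = W1 ∪ SDAux.Wset P X Y h m := by
    unfold SDAux.Wset
    rw [SDAux.cnt_top]
    ext e
    simp only [bundle, hW1def, Finset.mem_filter, Finset.mem_union, Finset.mem_univ, true_and]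
    tauto
  -- every doctor in W1 is spanned by X's bundle at h
  have hspan : v h (bundle X h ∪ W1) = v h (bundle X h) := by
    refine SDAux.spanning hvh fun e he heX => ?_
    rw [hW1def, Finset.mem_filter] at he
    obtain ⟨-, hYe, hne⟩ := he
    have heXh : ¬ X e = some h := by
      intro hc
      exact heX (by simp only [bundle, Finset.mem_filter, Finset.mem_univ, true_and]; exact hc)
    have hsmall : v h (insert e (bundleBefore X h e)) - v h (bundleBefore X h e) = 0 := by
      rcases hXe : X e with _ | g
      · exact (hX e).2 hXe h
      · have hgh : g ≠ h := fun hc => heXh (hc ▸ hXe)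
        have hnp : ¬ P e g h := fun hp => hne ⟨g, hXe, hp⟩
        haveI := hP e
        rcases trichotomous_of (P e) h g with hp | hp | hp
        · exact ((hX e).1 g hXe).2 h hp
        · exact absurd hp.symm hgh
        · exact absurd hp hnp
    have hsub : bundleBefore X h e ⊆ bundle X h := by
      intro d hd
      simp only [bundleBefore, bundle, Finset.mem_filter, Finset.mem_univ, true_and] at hd ⊢
      exact hd.1
    have h1 := hvh.2.2 (bundleBefore X h e) (bundle X h) e hsub heX
    have h2 := SDAux.marg_nonneg hvh heX
    omega
  have hW1le : v h W1 ≤ v h (bundle X h) :=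
    le_trans (SDAux.mono hvh Finset.subset_union_right) (le_of_eq hspan)
  have hsub2 : v h (bundle Y h) ≤ v h W1 + v h (SDAux.Wset P X Y h m) := by
    rw [hdecomp]
    exact SDAux.subadd hvh _ _
  have hWcard : v h (SDAux.Wset P X Y h m) ≤ ((SDAux.Wset P X Y h m).card : ℤ) :=
    SDAux.le_card hvh _
  linarith
end
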